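/- The formula K_1 L_2 p (agent 1 knows that agent 2 considers p possible) is unsuccessful in S5 with at least two agents: there is an S5 model M and a world w such that M, w ⊨ K_1 L_2 p but M|_{K_1 L_2 p}, w ⊭ K_1 L_2 p. -/

import Mathlib

/-- Formulas of public announcement logic over agent type `A` and atoms `P`. -/
inductive Form (A P : Type) : Type where
  | atom : P → Form A P
  | neg  : Form A P → Form A P
  | and  : Form A P → Form A P → Form A P
  | or   : Form A P → Form A P → Form A P
  | K    : A → Form A P → Form A P
  | ann  : Form A P → Form A P → Form A P

/-- The possibility operator `L_a φ := ¬ K_a ¬ φ`. -/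
def Form.L {A P : Type} (a : A) (φ : Form A P) : Form A P := .neg (.K a (.neg φ))

/-- An S5 epistemic model: worlds, an equivalence relation per agent, a valuation. -/
structure Model (A P : Type) where
  W : Type
  R : A → W → W → Prop
  equiv : ∀ a, Equivalence (R a)
  V : P → W → Prop

/-- Restriction (submodel) of a model to the worlds satisfying `S`. -/
def Model.restrict {A P : Type} (M : Model A P) (S : M.W → Prop) : Model A P where
  W := {w : M.W // S w}
  R a u v := M.R a u.1 v.1
  equiv a := ⟨fun _ => (M.equiv a).refl _, fun h => (M.equiv a).symm h,
              fun h h' => (M.equiv a).trans h h'⟩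
  V p w := M.V p w.1

/-- Truth of a formula at a world of a model. -/
def sat {A P : Type} : (M : Model A P) → M.W → Form A P → Prop
  | M, w, .atom p => M.V p w
  | M, w, .neg φ => ¬ sat M w φ
  | M, w, .and φ ψ => sat M w φ ∧ sat M w ψ
  | M, w, .or φ ψ => sat M w φ ∨ sat M w ψ
  | M, w, .K a φ => ∀ v, M.R a w v → sat M v φ
  | M, w, .ann φ ψ => ∀ h : sat M w φ, sat (M.restrict (fun v => sat M v φ)) ⟨w, h⟩ ψ

/-- A formula is successful iff it remains true after being announced. -/
def successful {A P : Type} (φ : Form A P) : Prop :=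
  ∀ (M : Model A P) (w : M.W) (h : sat M w φ),
    sat (M.restrict (fun v => sat M v φ)) ⟨w, h⟩ φ

/-- Purely propositional formulas (no epistemic or announcement operators). -/
def Form.isProp {A P : Type} : Form A P → Prop
  | .atom _ => True
  | .neg φ => φ.isProp
  | .and φ ψ => φ.isProp ∧ ψ.isProp
  | .or φ ψ => φ.isProp ∧ ψ.isProp
  | .K _ _ => False
  | .ann _ _ => False

/-- Prefix a formula with a sequence of `K` operators. -/
def Kseq {A P : Type} (l : List A) (φ : Form A P) : Form A P := l.foldr .K φ

/-- Prefix a formula with a sequence of `L` operators. -/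
def Lseq {A P : Type} (l : List A) (φ : Form A P) : Form A P := l.foldr Form.L φ

/-- Prefix a formula with a sequence of epistemic operators:
`(a, true)` stands for `K_a` and `(a, false)` for `L_a`. -/
def Eseq {A P : Type} (l : List (A × Bool)) (φ : Form A P) : Form A P :=
  l.foldr (fun e ψ => if e.2 then .K e.1 ψ else Form.L e.1 ψ) φ

/-- Boolean accessibility: agent 0 has classes {0,1},{2,3}; agent 1 has {1,2},{0},{3}. -/
def myR : Fin 2 → Fin 4 → Fin 4 → Bool
  | 0, u, v => u / 2 == v / 2
  | 1, u, v => u == v || (u == 1 && v == 2) || (u == 2 && v == 1)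

/-- The witnessing model. -/
@[reducible]
def myM : Model (Fin 2) Unit where
  W := Fin 4
  R a u v := myR a u v = true
  equiv a := by
    refine ⟨?_, ?_, ?_⟩
    · revert a; decide
    · revert a; decide
    · revert a; decide
  V _ w := w = 0 ∨ w = 2

instance : Fintype myM.W := inferInstanceAs (Fintype (Fin 4))

instance (a : Fin 2) (u v : myM.W) : Decidable (myM.R a u v) :=
  inferInstanceAs (Decidable (myR a u v = true))

instance (S : myM.W → Prop) (a : Fin 2) (u v : (myM.restrict S).W) :
    Decidable ((myM.restrict S).R a u v) :=
  inferInstanceAs (Decidable (myR a u.1 v.1 = true))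

/-- The formula `K_1 L_2 p` is unsuccessful in S5 with two agents. -/
theorem K1L2p_unsuccessful :
    ∃ (M : Model (Fin 2) Unit) (w : M.W)
      (h : sat M w (Form.K 0 (Form.L 1 (.atom ())))),
      ¬ sat (M.restrict (fun v => sat M v (Form.K 0 (Form.L 1 (.atom ())))))
          ⟨w, h⟩ (Form.K 0 (Form.L 1 (.atom ()))) := by
  have h0 : sat myM (0 : Fin 4) (Form.K 0 (Form.L 1 (.atom ()))) := by
    intro v hv hK
    fin_cases v
    · exact hK (0 : Fin 4) (by decide) (Or.inl rfl)
    · exact hK (2 : Fin 4) (by decide) (Or.inr rfl)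
    · exact absurd hv (by decide)
    · exact absurd hv (by decide)
  have h1 : sat myM (1 : Fin 4) (Form.K 0 (Form.L 1 (.atom ()))) := by
    intro v hv hK
    fin_cases v
    · exact hK (0 : Fin 4) (by decide) (Or.inl rfl)
    · exact hK (2 : Fin 4) (by decide) (Or.inr rfl)
    · exact absurd hv (by decide)
    · exact absurd hv (by decide)
  have hn2 : ¬ sat myM (2 : Fin 4) (Form.K 0 (Form.L 1 (.atom ()))) := by
    intro H
    apply H (3 : Fin 4) (by decide)
    intro u hu hVu
    fin_cases u
    · exact absurd hu (by decide)
    · exact absurd hu (by decide)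
    · exact absurd hu (by decide)
    · rcases hVu with h | h <;> exact absurd h (by decide)
  refine ⟨myM, (0 : Fin 4), h0, ?_⟩
  intro H
  have h' := H ⟨(1 : Fin 4), h1⟩ (show myR 0 1 1 = true by decide)
  apply h'
  rintro ⟨u, hu⟩ hru hVu
  fin_cases u
  · exact absurd hru (show ¬ myR 1 1 0 = true by decide)
  · rcases hVu with h | h
    · exact absurd h (show ¬ (1 : Fin 4) = 0 by decide)
    · exact absurd h (show ¬ (1 : Fin 4) = 2 by decide)
  · exact hn2 hu
  · exact absurd hru (show ¬ myR 1 1 3 = true by decide)
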